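/- In the random sketch model, for every bin index j ∈ {0,…,t−1} the indicator X_j satisfies E[X_j] = J; consequently E[X_0 + X_1 + ⋯ + X_{t−1}] = t·J. (Unbiasedness of the fast similarity sketch.) -/

import Mathlib

open Finset

/-- The bin function of the sketch model: for `i < t` it is the (random) function `f i`;
for `t ≤ i < 2t` it is deterministically the constant function with value `i - t`. -/
def binFun {U : Type*} (t : ℕ) (f : Fin t → U → Fin t) (i : Fin (2 * t)) : U → Fin t :=
  if h : (i : ℕ) < t then f ⟨i, h⟩ else fun _ => ⟨(i : ℕ) - t, by have := i.isLt; omega⟩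

/-- The sketch key `S(C)[j]`: the lexicographically smallest pair `(i, σ i c)` over all
`i ∈ [2t]` and `c ∈ C` with `b i c = j` (as an element of `WithTop`, which is never `⊤`
when `C` is nonempty, since `b (t+j)` is constantly `j`). -/
def sketch {U : Type*} [Fintype U] [LinearOrder U] (t : ℕ) (σ : Fin (2 * t) → Equiv.Perm U)
    (b : Fin (2 * t) → U → Fin t) (C : Finset U) (j : Fin t) :
    WithTop (Lex (Fin (2 * t) × U)) :=
  (((Finset.univ ×ˢ C).filter fun p => b p.1 p.2 = j).image
    fun p => toLex (p.1, σ p.1 p.2)).min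

/-- The sample space of the random sketch model: a uniformly random permutation `σ i` for
each `i ∈ [2t]`, and a uniformly random bin function for each `i ∈ [t]`
(the bin functions for `t ≤ i < 2t` being deterministic); all components independent,
i.e. the whole tuple is uniform on this finite product space. -/
abbrev Model (U : Type*) [Fintype U] [DecidableEq U] (t : ℕ) : Type _ :=
  (Fin (2 * t) → Equiv.Perm U) × (Fin t → U → Fin t)

/-- The indicator `X_j = [S(A)[j] = S(B)[j]]` at sample point `ω`. -/
noncomputable def Xind {U : Type*} [Fintype U] [LinearOrder U] {t : ℕ}
    (ω : Model U t) (A B : Finset U) (j : Fin t) : ℝ :=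
  if sketch t ω.1 (binFun t ω.2) A j = sketch t ω.1 (binFun t ω.2) B j then 1 else 0

namespace SketchAux

variable {U : Type*} [Fintype U] [LinearOrder U] {t : ℕ}

/-- The key of a pair `(i, c)`. -/
def key (σ : Fin (2 * t) → Equiv.Perm U) (p : Fin (2 * t) × U) : Lex (Fin (2 * t) × U) :=
  toLex (p.1, σ p.1 p.2)

lemma key_inj (σ : Fin (2 * t) → Equiv.Perm U) : Function.Injective (key σ) := by
  rintro ⟨i, c⟩ ⟨i', c'⟩ h
  have h2 : ((i, σ i c) : Fin (2 * t) × U) = (i', σ i' c') := toLex.injective h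
  have h1 : i = i' := congrArg Prod.fst h2
  subst h1
  have h3 : σ i c = σ i c' := congrArg Prod.snd h2
  exact congrArg (Prod.mk i) ((σ i).injective h3)

/-- The set of admissible pairs. -/
def binset (b : Fin (2 * t) → U → Fin t) (C : Finset U) (j : Fin t) :
    Finset (Fin (2 * t) × U) :=
  (Finset.univ ×ˢ C).filter fun p => b p.1 p.2 = j

lemma mem_binset {b : Fin (2 * t) → U → Fin t} {C : Finset U} {j : Fin t}
    {p : Fin (2 * t) × U} : p ∈ binset b C j ↔ p.2 ∈ C ∧ b p.1 p.2 = j := by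
  simp [binset]

lemma sketch_eq_min (σ : Fin (2 * t) → Equiv.Perm U) (b : Fin (2 * t) → U → Fin t)
    (C : Finset U) (j : Fin t) :
    sketch t σ b C j = ((binset b C j).image (key σ)).min := rfl

lemma binset_nonempty (f : Fin t → U → Fin t) {C : Finset U} (hC : C.Nonempty) (j : Fin t) :
    (binset (binFun t f) C j).Nonempty := by
  obtain ⟨c, hc⟩ := hC
  have hj := j.isLt
  refine ⟨(⟨t + j, by omega⟩, c), mem_binset.mpr ⟨hc, ?_⟩⟩
  show binFun t f ⟨t + j, _⟩ c = j
  rw [binFun, dif_neg (by simp)]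
  exact Fin.ext (by simp)

/-- The minimizing pair for `A ∪ B`. -/
noncomputable def pstar [Nonempty U] (ω : Model U t) (A B : Finset U) (j : Fin t) :
    Fin (2 * t) × U :=
  if h : (binset (binFun t ω.2) (A ∪ B) j).Nonempty then
    (Finset.exists_min_image _ (key ω.1) h).choose
  else (⟨t + j, by have := j.isLt; omega⟩, Classical.arbitrary U)

lemma pstar_spec [Nonempty U] {ω : Model U t} {A B : Finset U} {j : Fin t}
    (h : (binset (binFun t ω.2) (A ∪ B) j).Nonempty) :
    pstar ω A B j ∈ binset (binFun t ω.2) (A ∪ B) j ∧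
      ∀ q ∈ binset (binFun t ω.2) (A ∪ B) j, key ω.1 (pstar ω A B j) ≤ key ω.1 q := by
  rw [pstar, dif_pos h]
  exact (Finset.exists_min_image _ (key ω.1) h).choose_spec

lemma Xind_eq [Nonempty U] (ω : Model U t) (A B : Finset U) (j : Fin t)
    (hAB : (A ∪ B).Nonempty) :
    Xind ω A B j = if (pstar ω A B j).2 ∈ A ∩ B then 1 else 0 := by
  obtain ⟨hmem, hmin⟩ := pstar_spec (ω := ω) (binset_nonempty ω.2 hAB j)
  set p := pstar ω A B j with hp
  have sub : ∀ C : Finset U, C ⊆ A ∪ B → p ∈ binset (binFun t ω.2) C j →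
      sketch t ω.1 (binFun t ω.2) C j = ↑(key ω.1 p) := by
    intro C hC hpC
    rw [sketch_eq_min]
    apply le_antisymm
    · exact Finset.min_le (Finset.mem_image_of_mem _ hpC)
    · apply Finset.le_min
      intro y hy
      obtain ⟨q, hq, rfl⟩ := Finset.mem_image.mp hy
      have : q ∈ binset (binFun t ω.2) (A ∪ B) j := by
        rw [mem_binset] at hq ⊢; exact ⟨hC hq.1, hq.2⟩
      exact_mod_cast hmin q this
  rw [Xind]
  by_cases hA : p.2 ∈ A ∩ B
  · rw [if_pos hA, if_pos]
    have hA' := Finset.mem_inter.mp hA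
    rw [sub A Finset.subset_union_left (mem_binset.mpr ⟨hA'.1, (mem_binset.mp hmem).2⟩),
        sub B Finset.subset_union_right (mem_binset.mpr ⟨hA'.2, (mem_binset.mp hmem).2⟩)]
  · rw [if_neg hA, if_neg]
    intro heq
    apply hA
    have hpU := mem_binset.mp hmem
    have hkey : sketch t ω.1 (binFun t ω.2) A j = ↑(key ω.1 p) ∧
        sketch t ω.1 (binFun t ω.2) B j = ↑(key ω.1 p) := by
      rcases Finset.mem_union.mp hpU.1 with hA2 | hB2
      · have h := sub A Finset.subset_union_left (mem_binset.mpr ⟨hA2, hpU.2⟩)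
        exact ⟨h, by rw [← heq]; exact h⟩
      · have h := sub B Finset.subset_union_right (mem_binset.mpr ⟨hB2, hpU.2⟩)
        exact ⟨by rw [heq]; exact h, h⟩
    refine Finset.mem_inter.mpr ⟨?_, ?_⟩
    · have hm1 : ((binset (binFun t ω.2) A j).image (key ω.1)).min = ↑(key ω.1 p) := by
        rw [← sketch_eq_min]; exact hkey.1
      obtain ⟨q, hq, hqk⟩ := Finset.mem_image.mp (Finset.mem_of_min hm1)
      have hqp : q = p := key_inj ω.1 hqk
      exact hqp ▸ (mem_binset.mp hq).1
    · have hm2 : ((binset (binFun t ω.2) B j).image (key ω.1)).min = ↑(key ω.1 p) := by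
        rw [← sketch_eq_min]; exact hkey.2
      obtain ⟨q, hq, hqk⟩ := Finset.mem_image.mp (Finset.mem_of_min hm2)
      have hqp : q = p := key_inj ω.1 hqk
      exact hqp ▸ (mem_binset.mp hq).1

/-- Relabelling action of a permutation of `U` on the sample space. -/
def act (τ : Equiv.Perm U) (ω : Model U t) : Model U t :=
  (fun i => ω.1 i * τ, fun i c => ω.2 i (τ c))

lemma binFun_act (τ : Equiv.Perm U) (ω : Model U t) (i : Fin (2 * t)) (c : U) :
    binFun t (act τ ω).2 i c = binFun t ω.2 i (τ c) := by
  unfold binFun act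
  split <;> rfl

lemma key_act (τ : Equiv.Perm U) (ω : Model U t) (p : Fin (2 * t) × U) :
    key (act τ ω).1 p = key ω.1 (p.1, τ p.2) := rfl

lemma act_act (τ : Equiv.Perm U) (hτ : τ * τ = 1) (ω : Model U t) :
    act τ (act τ ω) = ω := by
  unfold act
  refine Prod.ext ?_ ?_
  · funext i
    show ω.1 i * τ * τ = ω.1 i
    rw [mul_assoc, hτ, mul_one]
  · funext i c
    show ω.2 i (τ (τ c)) = ω.2 i c
    have : τ (τ c) = (τ * τ) c := rfl
    rw [this, hτ]; rfl

lemma pstar_act [Nonempty U] (τ : Equiv.Perm U) (ω : Model U t) (A B : Finset U) (j : Fin t)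
    (hAB : (A ∪ B).Nonempty) (hτ : ∀ c, τ c ∈ A ∪ B ↔ c ∈ A ∪ B) :
    pstar (act τ ω) A B j = ((pstar ω A B j).1, τ⁻¹ (pstar ω A B j).2) := by
  have hmb : ∀ p : Fin (2 * t) × U,
      p ∈ binset (binFun t (act τ ω).2) (A ∪ B) j ↔
      (p.1, τ p.2) ∈ binset (binFun t ω.2) (A ∪ B) j := by
    intro p
    rw [mem_binset, mem_binset, binFun_act]
    simp [hτ]
  obtain ⟨hm, hmin⟩ := pstar_spec (ω := ω) (binset_nonempty ω.2 hAB j)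
  obtain ⟨hm', hmin'⟩ := pstar_spec (ω := act τ ω) (binset_nonempty (act τ ω).2 hAB j)
  set p := pstar ω A B j with hpdef
  set q := pstar (act τ ω) A B j with hqdef
  have hq_mem : ((p.1, τ⁻¹ p.2) : Fin (2 * t) × U) ∈
      binset (binFun t (act τ ω).2) (A ∪ B) j := by
    rw [hmb]
    simpa using hm
  apply key_inj (act τ ω).1
  apply le_antisymm
  · exact hmin' _ hq_mem
  · rw [key_act, key_act]
    simp only [Equiv.Perm.inv_def, Equiv.apply_symm_apply]
    have h := hmin _ ((hmb q).mp hm')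
    simpa using h

lemma fiber_card_eq [Nonempty U] (A B : Finset U) (j : Fin t) (hAB : (A ∪ B).Nonempty)
    {x y : U} (hx : x ∈ A ∪ B) (hy : y ∈ A ∪ B) :
    (Finset.univ.filter fun ω : Model U t => (pstar ω A B j).2 = x).card
      = (Finset.univ.filter fun ω : Model U t => (pstar ω A B j).2 = y).card := by
  set τ := Equiv.swap x y with hτdef
  have hτC : ∀ c, τ c ∈ A ∪ B ↔ c ∈ A ∪ B := by
    intro c
    rcases eq_or_ne c x with rfl | hcx
    · rw [hτdef, Equiv.swap_apply_left]; exact iff_of_true hy hx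
    · rcases eq_or_ne c y with rfl | hcy
      · rw [hτdef, Equiv.swap_apply_right]; exact iff_of_true hx hy
      · rw [hτdef, Equiv.swap_apply_of_ne_of_ne hcx hcy]
  have hmap : ∀ z : U, ∀ ω ∈ Finset.univ.filter fun ω : Model U t => (pstar ω A B j).2 = z,
      act τ ω ∈ Finset.univ.filter fun ω : Model U t => (pstar ω A B j).2 = τ z := by
    intro z ω hω
    rw [Finset.mem_filter] at hω ⊢
    refine ⟨Finset.mem_univ _, ?_⟩
    rw [pstar_act τ ω A B j hAB hτC, hω.2]
    rw [hτdef, Equiv.swap_inv]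
  have hinv : τ * τ = 1 := Equiv.swap_mul_self x y
  apply Finset.card_bij' (fun ω _ => act τ ω) (fun ω _ => act τ ω)
  · intro ω hω
    have := hmap x ω hω
    rwa [Equiv.swap_apply_left] at this
  · intro ω hω
    have := hmap y ω hω
    rwa [Equiv.swap_apply_right] at this
  · intro ω _
    exact act_act τ hinv ω
  · intro ω _
    exact act_act τ hinv ω

end SketchAux

open SketchAux in
/-- **Unbiasedness of the fast similarity sketch.** In the random sketch model (uniform
measure on `Model U t`), `E[X_j] = J` for every bin `j`, and consequently
`E[∑ j, X_j] = t * J`, where `J = |A ∩ B| / |A ∪ B|`. -/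
theorem stmt0 {U : Type*} [Fintype U] [LinearOrder U] (t : ℕ) (ht : 0 < t)
    (A B : Finset U) (hAB : (A ∪ B).Nonempty) :
    (∀ j : Fin t,
      (∑ ω : Model U t, Xind ω A B j) / (Fintype.card (Model U t) : ℝ)
        = ((A ∩ B).card : ℝ) / ((A ∪ B).card : ℝ)) ∧
    (∑ ω : Model U t, ∑ j : Fin t, Xind ω A B j) / (Fintype.card (Model U t) : ℝ)
        = (t : ℝ) * (((A ∩ B).card : ℝ) / ((A ∪ B).card : ℝ)) := by
  obtain ⟨x0, hx0⟩ := hAB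
  haveI : Nonempty U := ⟨x0⟩
  haveI : NeZero t := ⟨ht.ne'⟩
  have hAB' : (A ∪ B).Nonempty := ⟨x0, hx0⟩
  have hpos : 0 < Fintype.card (Model U t) := Fintype.card_pos
  have hmain : ∀ j : Fin t,
      (∑ ω : Model U t, Xind ω A B j) / (Fintype.card (Model U t) : ℝ)
        = ((A ∩ B).card : ℝ) / ((A ∪ B).card : ℝ) := by
    intro j
    set N : U → ℕ := fun x =>
      (Finset.univ.filter fun ω : Model U t => (pstar ω A B j).2 = x).card with hNdef
    have hNconst : ∀ x ∈ A ∪ B, N x = N x0 := fun x hx =>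
      fiber_card_eq A B j hAB' hx hx0
    have hcard : Fintype.card (Model U t) = (A ∪ B).card * N x0 := by
      rw [← Finset.card_univ,
        Finset.card_eq_sum_card_fiberwise (f := fun ω : Model U t => (pstar ω A B j).2)
          (t := A ∪ B)
          (fun ω _ => (mem_binset.mp (pstar_spec (binset_nonempty ω.2 hAB' j)).1).1)]
      rw [Finset.sum_congr rfl hNconst, Finset.sum_const, smul_eq_mul]
    have hsum : ∑ ω : Model U t, Xind ω A B j = ((A ∩ B).card * N x0 : ℕ) := by
      have h1 : ∑ ω : Model U t, Xind ω A B j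
          = ((Finset.univ.filter
              fun ω : Model U t => (pstar ω A B j).2 ∈ A ∩ B).card : ℝ) := by
        rw [← Finset.sum_boole]
        exact Finset.sum_congr rfl fun ω _ => Xind_eq ω A B j hAB'
      rw [h1]
      norm_cast
      rw [Finset.card_eq_sum_card_fiberwise (f := fun ω : Model U t => (pstar ω A B j).2)
          (s := Finset.univ.filter fun ω : Model U t => (pstar ω A B j).2 ∈ A ∩ B)
          (t := A ∩ B) (fun ω hω => (Finset.mem_filter.mp hω).2)]
      have h2 : ∀ x ∈ A ∩ B,
          ((Finset.univ.filter fun ω : Model U t => (pstar ω A B j).2 ∈ A ∩ B).filter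
            fun ω => (pstar ω A B j).2 = x).card = N x0 := by
        intro x hx
        have hxe : x ∈ A ∪ B := Finset.mem_union_left _ (Finset.mem_inter.mp hx).1
        rw [← hNconst x hxe, hNdef]
        congr 1
        rw [Finset.filter_filter]
        apply Finset.filter_congr
        intro ω _
        constructor
        · rintro ⟨_, h⟩; exact h
        · rintro h; exact ⟨h ▸ hx, h⟩
      rw [Finset.sum_congr rfl h2, Finset.sum_const, smul_eq_mul]
    have hN0 : (N x0 : ℝ) ≠ 0 := by
      have : 0 < N x0 := by
        by_contra h
        push_neg at h
        interval_cases h' : N x0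
        · rw [hcard] at hpos; omega
      exact_mod_cast this.ne'
    rw [hsum, hcard]
    push_cast
    rw [mul_div_mul_right _ _ hN0]
  refine ⟨hmain, ?_⟩
  rw [Finset.sum_comm, Finset.sum_div]
  rw [Finset.sum_congr rfl fun j _ => hmain j]
  rw [Finset.sum_const, Finset.card_univ, Fintype.card_fin, nsmul_eq_mul]
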